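/- For integers $n \geq 2$, $k \geq 3$, and all $p$ with $0 \leq p \leq \lfloor n/2 \rfloor - 1$, the quantity $S_{n-2p,\,n+1-p,\,n+k} = \sum_{i=0}^{N(n-2p,n+1-p)} (-1)^i \binom{n+1-p}{i}\binom{n+k+n-2p-2i}{n-2p-2i}$ is strictly positive, where $N(a,b)=\min\{\lfloor a/2\rfloor, b\}$. -/

import Mathlib

open PowerSeries Finset

/-- `S_{m,s,t} = ∑_{i=0}^{min(⌊m/2⌋,s)} (-1)^i C(s,i) C(t+m-2i, m-2i)`. -/
def S (n s t : ℕ) : ℤ :=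
  ∑ i ∈ Finset.range (min (n / 2) s + 1),
    (-1 : ℤ) ^ i * (s.choose i : ℤ) * ((t + n - 2 * i).choose (n - 2 * i) : ℤ)

/-- Expansion of `(1 - X^2)^s` in `ℤ⟦X⟧`. -/
private lemma one_sub_X_sq_pow (s : ℕ) :
    ((1 - X ^ 2 : ℤ⟦X⟧)) ^ s
      = ∑ i ∈ Finset.range (s + 1),
          PowerSeries.C ((-1 : ℤ) ^ i * (s.choose i : ℤ)) * X ^ (2 * i) := by
  have h : (1 - X ^ 2 : ℤ⟦X⟧) = (-(X ^ 2)) + 1 := by ring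
  rw [h, add_pow]
  refine Finset.sum_congr rfl fun i _ => ?_
  rw [one_pow, mul_one, neg_pow]
  simp only [map_mul, map_pow, map_neg, map_one, map_natCast]
  ring

private lemma coeff_one_sub_X_sq_pow_mul (s m : ℕ) (f : ℤ⟦X⟧) :
    (coeff m) ((1 - X ^ 2 : ℤ⟦X⟧) ^ s * f)
      = ∑ i ∈ Finset.range (s + 1),
          (-1 : ℤ) ^ i * (s.choose i : ℤ) *
            (if 2 * i ≤ m then (coeff (m - 2 * i)) f else 0) := by
  rw [one_sub_X_sq_pow, Finset.sum_mul, map_sum]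
  refine Finset.sum_congr rfl fun i _ => ?_
  rw [mul_assoc, coeff_C_mul, coeff_X_pow_mul']

/-- Expansion of `(1 + X)^s` coefficients. -/
private lemma coeff_one_add_X_pow (s j : ℕ) :
    (coeff j) ((1 + X : ℤ⟦X⟧) ^ s) = (s.choose j : ℤ) := by
  have h : (1 + X : ℤ⟦X⟧) ^ s
      = ∑ i ∈ Finset.range (s + 1), PowerSeries.C ((s.choose i : ℤ)) * X ^ i := by
    have h1 : (1 + X : ℤ⟦X⟧) = X + 1 := by ring
    rw [h1, add_pow]
    refine Finset.sum_congr rfl fun i _ => ?_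
    rw [one_pow, mul_one, map_natCast]
    ring
  rw [h, map_sum]
  simp only [coeff_C_mul_X_pow]
  rw [Finset.sum_ite_eq (Finset.range (s + 1)) j fun i => ((s.choose i : ℤ))]
  by_cases hj : j ≤ s
  · rw [if_pos (Finset.mem_range.mpr (Nat.lt_succ_of_le hj))]
  · rw [if_neg (fun hmem => hj (Nat.lt_succ_iff.mp (Finset.mem_range.mp hmem))),
      Nat.choose_eq_zero_of_lt (by omega)]
    simp

private lemma main_series_eq (s d : ℕ) :
    ((1 - X ^ 2 : ℤ⟦X⟧) ^ s) * (invOneSubPow ℤ (s + d + 1)).val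
      = ((1 + X : ℤ⟦X⟧) ^ s) * (invOneSubPow ℤ (d + 1)).val := by
  have hne : ((1 - X : ℤ⟦X⟧) ^ (s + d + 1)) ≠ 0 := by
    apply pow_ne_zero
    intro h
    have := congrArg (constantCoeff (R := ℤ)) h
    simp at this
  apply mul_right_cancel₀ hne
  have h1 : (invOneSubPow ℤ (s + d + 1)).val * (1 - X : ℤ⟦X⟧) ^ (s + d + 1) = 1 := by
    rw [← invOneSubPow_inv_eq_one_sub_pow]
    exact (invOneSubPow ℤ (s + d + 1)).val_inv
  have h2 : (invOneSubPow ℤ (d + 1)).val * (1 - X : ℤ⟦X⟧) ^ (d + 1) = 1 := by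
    rw [← invOneSubPow_inv_eq_one_sub_pow]
    exact (invOneSubPow ℤ (d + 1)).val_inv
  have hsplit : ((1 - X : ℤ⟦X⟧) ^ (s + d + 1)) = (1 - X) ^ s * (1 - X) ^ (d + 1) := by
    rw [show s + d + 1 = s + (d + 1) by omega, pow_add]
  calc (1 - X ^ 2 : ℤ⟦X⟧) ^ s * (invOneSubPow ℤ (s + d + 1)).val * (1 - X) ^ (s + d + 1)
      = (1 - X ^ 2 : ℤ⟦X⟧) ^ s *
          ((invOneSubPow ℤ (s + d + 1)).val * (1 - X) ^ (s + d + 1)) := by ring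
    _ = (1 - X ^ 2 : ℤ⟦X⟧) ^ s := by rw [h1, mul_one]
    _ = (1 + X : ℤ⟦X⟧) ^ s * (1 - X) ^ s := by rw [← mul_pow]; ring_nf
    _ = (1 + X : ℤ⟦X⟧) ^ s * (invOneSubPow ℤ (d + 1)).val * (1 - X) ^ (s + d + 1) := by
        rw [hsplit]
        calc (1 + X : ℤ⟦X⟧) ^ s * (1 - X) ^ s
            = (1 + X : ℤ⟦X⟧) ^ s * (1 - X) ^ s *
                ((invOneSubPow ℤ (d + 1)).val * (1 - X) ^ (d + 1)) := by rw [h2, mul_one]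
          _ = _ := by ring

/-- The key identity: `S m s (s+d)` as a manifestly nonnegative sum. -/
private lemma S_eq_sum (m s d : ℕ) :
    S m s (s + d) = ∑ j ∈ Finset.range (m + 1),
      (s.choose j : ℤ) * ((d + (m - j)).choose (m - j) : ℤ) := by
  have h := congrArg (coeff m) (main_series_eq s d)
  rw [coeff_one_sub_X_sq_pow_mul, coeff_mul] at h
  rw [invOneSubPow_val_succ_eq_mk_add_choose, invOneSubPow_val_succ_eq_mk_add_choose] at h
  simp only [coeff_mk, coeff_one_add_X_pow] at h
  rw [Finset.Nat.sum_antidiagonal_eq_sum_range_succ_mk] at h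
  have hL : S m s (s + d) = ∑ i ∈ Finset.range (s + 1),
      (-1 : ℤ) ^ i * (s.choose i : ℤ) *
        (if 2 * i ≤ m then (((s + d) + (m - 2 * i)).choose (s + d) : ℤ) else 0) := by
    rw [S]
    rw [← Finset.sum_subset (Finset.range_subset_range.mpr
      (by omega : min (m / 2) s + 1 ≤ s + 1))]
    · refine Finset.sum_congr rfl fun i hi => ?_
      have hi' : 2 * i ≤ m := by
        have := Finset.mem_range.mp hi; omega
      rw [if_pos hi']
      have e1 : (s + d) + m - 2 * i = (s + d) + (m - 2 * i) := by omega
      have e2 : ((s + d) + (m - 2 * i)).choose (m - 2 * i)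
          = ((s + d) + (m - 2 * i)).choose (s + d) := by
        have h' := Nat.choose_symm (n := (s + d) + (m - 2 * i)) (k := s + d)
          (Nat.le_add_right _ _)
        rw [show (s + d) + (m - 2 * i) - (s + d) = m - 2 * i by omega] at h'
        exact h'
      rw [e1, e2]
    · intro i hi hni
      have h1 := Finset.mem_range.mp hi
      have h2 : ¬ i < min (m / 2) s + 1 := fun h' => hni (Finset.mem_range.mpr h')
      have : ¬ 2 * i ≤ m := by omega
      rw [if_neg this, mul_zero]
  rw [hL, h]
  refine Finset.sum_congr rfl fun j _ => ?_
  have hnat : (d + (m - j)).choose d = (d + (m - j)).choose (m - j) := by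
    have h' := Nat.choose_symm (n := d + (m - j)) (k := d) (Nat.le_add_right _ _)
    rw [show d + (m - j) - d = m - j by omega] at h'
    exact h'.symm
  rw [hnat]

private lemma S_pos_of (m s d : ℕ) : 0 < S m s (s + d) := by
  rw [S_eq_sum]
  apply Finset.sum_pos' (fun j _ => by positivity)
  refine ⟨0, Finset.mem_range.mpr (Nat.succ_pos m), ?_⟩
  simp only [Nat.choose_zero_right, Nat.cast_one, one_mul, Nat.sub_zero]
  exact_mod_cast Nat.choose_pos (Nat.le_add_left m d)

theorem S_pos (n k p : ℕ) (hn : 2 ≤ n) (hk : 3 ≤ k) (hp : p ≤ n / 2 - 1) :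
    0 < S (n - 2 * p) (n + 1 - p) (n + k) := by
  have h : n + k = (n + 1 - p) + (k - 1 + p) := by omega
  rw [h]
  exact S_pos_of _ _ _
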